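/- Let T > 0 and let u, b : ℝ³ × [0,T] → ℝ³ be smooth, bounded with all derivatives, and divergence-free in x for each t. Set ω := curl_x u and j := curl_x b, and assume the current equation holds pointwise on ℝ³ × (0,T): ∂ₜj − Δj = −(u·∇)j + (j·∇)u + (b·∇)ω − (ω·∇)b + 2 ∑_{l=1}^3 ∇b_l × ∇u_l. Let φ(x,t) = η(t)ψ(x), where ψ : ℝ³ → [0,1] is smooth and compactly supported and η : [0,T] → [0,1] is smooth with η ≡ 0 on [0, T/3] and η ≡ 1 on [2T/3, T]. Then for every t ∈ [2T/3, T]: ∫₀^t ∫_{ℝ³} (1/2)‖j‖² (u·∇φ) dx ds = ∫_{ℝ³} (1/2)‖j(x,t)‖² ψ(x) dx + ∫₀^t ∫_{ℝ³} ‖∇j‖² φ dx ds − ∫₀^t ∫_{ℝ³} (1/2)‖j‖² (∂ₛφ + Δφ) dx ds − ∫₀^t ∫_{ℝ³} ((j·∇)u)·(φj) dx ds − ∫₀^t ∫_{ℝ³} ((b·∇)ω)·(φj) dx ds + ∫₀^t ∫_{ℝ³} ((ω·∇)b)·(φj) dx ds + ∫₀^t ∫_{ℝ³} ( 2 ∑_{l=1}^3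 ∇u_l × ∇b_l )·(φj) dx ds. -/

import Mathlib

open MeasureTheory

noncomputable section

/-- The partial derivative `∂ᵢ f` of a scalar field on `ℝ³`. -/
def pd (i : Fin 3) (f : (Fin 3 → ℝ) → ℝ) : (Fin 3 → ℝ) → ℝ :=
  fun x => fderiv ℝ f x (Pi.single i 1)

/-- The curl `∇ × F` of a vector field on `ℝ³`. -/
def curl3 (F : (Fin 3 → ℝ) → (Fin 3 → ℝ)) (x : Fin 3 → ℝ) : Fin 3 → ℝ :=
  ![pd 1 (fun z => F z 2) x - pd 2 (fun z => F z 1) x,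
    pd 2 (fun z => F z 0) x - pd 0 (fun z => F z 2) x,
    pd 0 (fun z => F z 1) x - pd 1 (fun z => F z 0) x]

/-- The advective derivative `(a·∇)c`, with components `∑ⱼ aⱼ ∂ⱼcᵢ`. -/
def adv (a c : (Fin 3 → ℝ) → (Fin 3 → ℝ)) (x : Fin 3 → ℝ) : Fin 3 → ℝ :=
  fun i => ∑ j, a x j * pd j (fun z => c z i) x

/-- The divergence `∑ᵢ ∂ᵢFᵢ` of a vector field on `ℝ³`. -/
def div3 (F : (Fin 3 → ℝ) → (Fin 3 → ℝ)) (x : Fin 3 → ℝ) : ℝ :=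
  ∑ i, pd i (fun z => F z i) x

/-- The cross product on `ℝ³`. -/
def cross3 (a b : Fin 3 → ℝ) : Fin 3 → ℝ :=
  ![a 1 * b 2 - a 2 * b 1, a 2 * b 0 - a 0 * b 2, a 0 * b 1 - a 1 * b 0]

-- smoothness of pd
lemma contDiff_pd {f : (Fin 3 → ℝ) → ℝ} (hf : ContDiff ℝ (⊤:ℕ∞) f) (i : Fin 3) :
    ContDiff ℝ (⊤:ℕ∞) (pd i f) := by
  have h1 : ContDiff ℝ (⊤:ℕ∞) (fderiv ℝ f) := by
    apply hf.fderiv_right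
    exact_mod_cast le_top
  exact (ContinuousLinearMap.apply ℝ ℝ (Pi.single i 1)).contDiff.comp h1

lemma pd_mul {f g : (Fin 3 → ℝ) → ℝ} {x : Fin 3 → ℝ}
    (hf : DifferentiableAt ℝ f x) (hg : DifferentiableAt ℝ g x) (i : Fin 3) :
    pd i (fun z => f z * g z) x = pd i f x * g x + f x * pd i g x := by
  have := fderiv_fun_mul hf hg
  simp only [pd, this]
  simp [mul_comm]
  ring

lemma pd_sum {ι : Type*} (s : Finset ι) (f : ι → (Fin 3 → ℝ) → ℝ) {x : Fin 3 → ℝ}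
    (hf : ∀ k ∈ s, DifferentiableAt ℝ (f k) x) (i : Fin 3) :
    pd i (fun z => ∑ k ∈ s, f k z) x = ∑ k ∈ s, pd i (f k) x := by
  simp only [pd]
  rw [fderiv_fun_sum hf]
  simp

lemma pd_const_mul {f : (Fin 3 → ℝ) → ℝ} {x : Fin 3 → ℝ}
    (hf : DifferentiableAt ℝ f x) (c : ℝ) (i : Fin 3) :
    pd i (fun z => c * f z) x = c * pd i f x := by
  simp only [pd, fderiv_const_mul hf c]; simp

lemma pd_zero_of_nmem_tsupport {f : (Fin 3 → ℝ) → ℝ} {x : Fin 3 → ℝ}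
    (hx : x ∉ tsupport f) (i : Fin 3) : pd i f x = 0 := by
  have : fderiv ℝ f x = 0 := by
    by_contra h
    exact hx (support_fderiv_subset ℝ (by simpa [Function.mem_support] using h))
  simp [pd, this]

-- divergence theorem on ℝ³
lemma integral_pd_eq_zero (g : (Fin 3 → ℝ) → ℝ) (hg : ContDiff ℝ (⊤:ℕ∞) g)
    (hs : HasCompactSupport g) (i : Fin 3) : ∫ x, pd i g x = 0 := by
  obtain ⟨C, hC⟩ := hg.lipschitzWith_of_hasCompactSupport hs (by simp)
  have h := LipschitzWith.integral_lineDeriv_mul_eq (μ := volume)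
      (LipschitzWith.const (1:ℝ)) hC hs (Pi.single i 1)
  have hz : ∀ x : Fin 3 → ℝ, lineDeriv ℝ (fun _ : Fin 3 → ℝ => (1:ℝ)) x (Pi.single i 1) = 0 := by
    intro x
    rw [DifferentiableAt.lineDeriv_eq_fderiv (differentiableAt_const _)]
    simp
  simp only [hz, zero_mul, integral_zero, mul_one] at h
  have h2 : ∀ x, lineDeriv ℝ g x (-(Pi.single i 1)) = - pd i g x := by
    intro x
    rw [DifferentiableAt.lineDeriv_eq_fderiv (hg.differentiable (by simp) x)]
    simp [pd]
  have h3 : (∫ x, lineDeriv ℝ g x (-(Pi.single i 1))) = ∫ x, - pd i g x :=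
    integral_congr_ae (Filter.Eventually.of_forall h2)
  rw [h3, integral_neg] at h
  linarith [h]



abbrev V3 := Fin 3 → ℝ

lemma diff_slice_t {F : V3 → ℝ → ℝ}
    (hF : ContDiff ℝ (⊤:ℕ∞) (fun p : V3 × ℝ => F p.1 p.2)) (x : V3) (s : ℝ) :
    DifferentiableAt ℝ (fun r => F x r) s := by
  have : (fun r => F x r) = (fun p : V3 × ℝ => F p.1 p.2) ∘ (fun r => (x, r)) := rfl
  rw [this]
  exact (hF.differentiable (by simp) _).comp _
    ((differentiable_const x).prodMk differentiable_id _)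

lemma contDiff_deriv_param {F : V3 → ℝ → ℝ}
    (hF : ContDiff ℝ (⊤:ℕ∞) (fun p : V3 × ℝ => F p.1 p.2)) :
    ContDiff ℝ (⊤:ℕ∞) (fun p : V3 × ℝ => deriv (fun r => F p.1 r) p.2) := by
  have h1 : ContDiff ℝ (⊤:ℕ∞) (fun p : V3 × ℝ => fderiv ℝ (fun r => F p.1 r) p.2) := by
    apply ContDiff.fderiv (f := fun (p : V3 × ℝ) (r : ℝ) => F p.1 r) (g := fun p => p.2)
    · exact hF.comp ((contDiff_fst.comp contDiff_fst).prodMk contDiff_snd)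
    · exact contDiff_snd
    · exact_mod_cast le_top
  have h2 := (ContinuousLinearMap.apply ℝ ℝ (1:ℝ)).contDiff.comp h1
  have h3 : (fun p : V3 × ℝ => deriv (fun r => F p.1 r) p.2)
      = fun p : V3 × ℝ => fderiv ℝ (fun r => F p.1 r) p.2 1 := by
    funext p; rw [← fderiv_apply_one_eq_deriv]
  rw [h3]; exact h2

lemma continuous_param_integral {K : Set V3} (hK : IsCompact K) {F : V3 → ℝ → ℝ}
    (hF : Continuous fun p : V3 × ℝ => F p.1 p.2) (h0 : ∀ x ∉ K, ∀ s, F x s = 0) :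
    Continuous fun s => ∫ x, F x s := by
  rw [continuous_iff_continuousAt]
  intro s₀
  obtain ⟨C, hC⟩ := (hK.prod (isCompact_Icc (a := s₀ - 1) (b := s₀ + 1))).exists_bound_of_continuousOn
    hF.continuousOn
  apply continuousAt_of_dominated (bound := K.indicator fun _ => C)
  · exact Filter.Eventually.of_forall fun s =>
      (hF.comp (continuous_id.prodMk continuous_const)).aestronglyMeasurable
  · filter_upwards [Metric.ball_mem_nhds s₀ one_pos] with s hs
    apply Filter.Eventually.of_forall
    intro x
    by_cases hx : x ∈ K
    · rw [Set.indicator_of_mem hx]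
      exact hC (x, s) ⟨hx, by rw [Real.ball_eq_Ioo] at hs; exact ⟨hs.1.le, hs.2.le⟩⟩
    · simp [h0 x hx, Set.indicator_of_notMem hx]
  · rw [integrable_indicator_iff hK.measurableSet]
    exact integrableOn_const hK.measure_lt_top.ne
  · exact Filter.Eventually.of_forall fun x =>
      (hF.comp (continuous_const.prodMk continuous_id)).continuousAt

lemma hasDerivAt_param_integral {K : Set V3} (hK : IsCompact K) {F : V3 → ℝ → ℝ}
    (hF : ContDiff ℝ (⊤:ℕ∞) (fun p : V3 × ℝ => F p.1 p.2)) (h0 : ∀ x ∉ K, ∀ s, F x s = 0)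
    (s₀ : ℝ) :
    HasDerivAt (fun s => ∫ x, F x s) (∫ x, deriv (fun r => F x r) s₀) s₀ := by
  have hd : ∀ x s, HasDerivAt (fun r => F x r) (deriv (fun r => F x r) s) s := fun x s =>
    (diff_slice_t hF x s).hasDerivAt
  have hderiv_cont : Continuous fun p : V3 × ℝ => deriv (fun r => F p.1 r) p.2 :=
    (contDiff_deriv_param hF).continuous
  obtain ⟨C, hC⟩ := (hK.prod (isCompact_Icc (a := s₀ - 1) (b := s₀ + 1))).exists_bound_of_continuousOn
    hderiv_cont.continuousOn
  have hzero : ∀ x ∉ K, ∀ s, deriv (fun r => F x r) s = 0 := by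
    intro x hx s
    have : (fun r => F x r) = fun _ => (0:ℝ) := funext fun r => h0 x hx r
    rw [this, deriv_const]
  have := hasDerivAt_integral_of_dominated_loc_of_deriv_le (μ := volume) (s := Metric.ball s₀ 1) (Metric.ball_mem_nhds s₀ one_pos)
    (F := fun s x => F x s) (F' := fun s x => deriv (fun r => F x r) s) (x₀ := s₀)
    (bound := K.indicator fun _ => C)
    (Filter.Eventually.of_forall fun s =>
      ((hF.continuous.comp (continuous_id.prodMk continuous_const)).aestronglyMeasurable))
    ?_ ?_ ?_ ?_ ?_
  · exact this.2
  · -- Integrable (F · s₀)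
    apply Continuous.integrable_of_hasCompactSupport
      (hF.continuous.comp (continuous_id.prodMk continuous_const))
    exact HasCompactSupport.intro hK fun x hx => h0 x hx s₀
  · exact (hderiv_cont.comp (continuous_id.prodMk continuous_const)).aestronglyMeasurable
  · apply Filter.Eventually.of_forall
    intro x s hs
    by_cases hx : x ∈ K
    · rw [Set.indicator_of_mem hx]
      exact hC (x, s) ⟨hx, by rw [Real.ball_eq_Ioo] at hs; exact ⟨hs.1.le, hs.2.le⟩⟩
    · simp [hzero x hx, Set.indicator_of_notMem hx]
  · rw [integrable_indicator_iff hK.measurableSet]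
    exact integrableOn_const hK.measure_lt_top.ne
  · exact Filter.Eventually.of_forall fun x s _ => hd x s


lemma cdiff {E F : Type*} [NormedAddCommGroup E] [NormedSpace ℝ E] [NormedAddCommGroup F]
    [NormedSpace ℝ F] {f : E → F} (hf : ContDiff ℝ (⊤:ℕ∞) f) (x : E) :
    DifferentiableAt ℝ f x := hf.differentiable (by simp) x

lemma contDiff_slice_x {F : V3 → ℝ → ℝ}
    (hF : ContDiff ℝ (⊤:ℕ∞) (fun p : V3 × ℝ => F p.1 p.2)) (s : ℝ) :
    ContDiff ℝ (⊤:ℕ∞) (fun z => F z s) :=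
  hF.comp (contDiff_id.prodMk contDiff_const)

lemma contDiff_pd_param {F : V3 → ℝ → ℝ}
    (hF : ContDiff ℝ (⊤:ℕ∞) (fun p : V3 × ℝ => F p.1 p.2)) (i : Fin 3) :
    ContDiff ℝ (⊤:ℕ∞) (fun p : V3 × ℝ => pd i (fun z => F z p.2) p.1) := by
  have h1 : ContDiff ℝ (⊤:ℕ∞) (fun p : V3 × ℝ => fderiv ℝ (fun z => F z p.2) p.1) := by
    apply ContDiff.fderiv (f := fun (p : V3 × ℝ) (z : V3) => F z p.2) (g := fun p => p.1)
    · exact hF.comp (contDiff_snd.prodMk (contDiff_snd.comp contDiff_fst))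
    · exact contDiff_fst
    · exact_mod_cast le_top
  exact (ContinuousLinearMap.apply ℝ ℝ (Pi.single i 1)).contDiff.comp h1

lemma contDiff_comp_eval {F : V3 → ℝ → V3}
    (hF : ContDiff ℝ (⊤:ℕ∞) (fun p : V3 × ℝ => F p.1 p.2)) (i : Fin 3) :
    ContDiff ℝ (⊤:ℕ∞) (fun p : V3 × ℝ => F p.1 p.2 i) :=
  (ContinuousLinearMap.proj (R := ℝ) (φ := fun _ : Fin 3 => ℝ) i).contDiff.comp hF

lemma pd_sub {f g : (Fin 3 → ℝ) → ℝ} {x : Fin 3 → ℝ}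
    (hf : DifferentiableAt ℝ f x) (hg : DifferentiableAt ℝ g x) (i : Fin 3) :
    pd i (fun z => f z - g z) x = pd i f x - pd i g x := by
  simp only [pd, fderiv_fun_sub hf hg]; simp

lemma cross3_anti (a b : Fin 3 → ℝ) (i : Fin 3) : cross3 a b i = - cross3 b a i := by
  fin_cases i <;> simp [cross3] <;> ring


lemma contDiff_curl_param {b : V3 → ℝ → V3}
    (hb : ContDiff ℝ (⊤:ℕ∞) (fun p : V3 × ℝ => b p.1 p.2)) (i : Fin 3) :
    ContDiff ℝ (⊤:ℕ∞) (fun p : V3 × ℝ => curl3 (fun y => b y p.2) p.1 i) := by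
  have h : ∀ (l : Fin 3) (k : Fin 3),
      ContDiff ℝ (⊤:ℕ∞) (fun p : V3 × ℝ => pd k (fun z => b z p.2 l) p.1) := fun l k =>
    contDiff_pd_param (F := fun z s => b z s l) (contDiff_comp_eval hb l) k
  fin_cases i <;>
  · simp only [curl3, Matrix.cons_val_zero, Matrix.cons_val_one, Matrix.head_cons,
      Matrix.cons_val_two, Matrix.tail_cons, Fin.isValue]
    exact ContDiff.sub (h _ _) (h _ _)


lemma continuous_slice {F : V3 → ℝ → ℝ} (hF : Continuous fun p : V3 × ℝ => F p.1 p.2) (s : ℝ) :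
    Continuous fun x => F x s :=
  hF.comp (continuous_id.prodMk continuous_const)

lemma tsupport_subset_of_zero {f : V3 → ℝ} {K : Set V3} (hKc : IsClosed K)
    (h : ∀ x ∉ K, f x = 0) : tsupport f ⊆ K :=
  closure_minimal (fun x hx => by by_contra hxK; exact hx (h x hxK)) hKc

lemma continuous_cross3_comp {X : Type*} [TopologicalSpace X] (a b : X → Fin 3 → ℝ)
    (ha : ∀ k, Continuous fun p => a p k) (hb : ∀ k, Continuous fun p => b p k) (i : Fin 3) :
    Continuous fun p => cross3 (a p) (b p) i := by
  fin_cases i <;>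
  · simp only [cross3, Matrix.cons_val_zero, Matrix.cons_val_one, Matrix.head_cons,
      Matrix.cons_val_two, Matrix.tail_cons, Fin.isValue]
    exact ((ha _).mul (hb _)).sub ((ha _).mul (hb _))

lemma continuous_adv_comp {A B : V3 → ℝ → V3}
    (hA : ∀ k, Continuous fun p : V3 × ℝ => A p.1 p.2 k)
    (hpdB : ∀ (i k : Fin 3), Continuous fun p : V3 × ℝ => pd k (fun z => B z p.2 i) p.1)
    (i : Fin 3) :
    Continuous fun p : V3 × ℝ => adv (fun y => A y p.2) (fun y => B y p.2) p.1 i := by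
  simp only [adv]
  exact continuous_finset_sum _ fun k _ => (hA k).mul (hpdB i k)

lemma tsupport_pd_subset {f : V3 → ℝ} (i : Fin 3) : tsupport (pd i f) ⊆ tsupport f := by
  apply closure_minimal _ isClosed_closure
  intro x hx
  by_contra hmem
  exact hx (pd_zero_of_nmem_tsupport hmem i)


lemma integral_split7 (f1 f2 f3 f4 f5 f6 f7 E : V3 → ℝ)
    (h1 : Integrable f1 volume) (h2 : Integrable f2 volume) (h3 : Integrable f3 volume)
    (h4 : Integrable f4 volume) (h5 : Integrable f5 volume) (h6 : Integrable f6 volume)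
    (h7 : Integrable f7 volume) (hE : Integrable E volume) (hE0 : (∫ x, E x) = 0) :
    (∫ x, ((f1 x - f2 x + f3 x + f4 x + f5 x - f6 x - f7 x) + E x))
      = (∫ x, f1 x) - (∫ x, f2 x) + (∫ x, f3 x) + (∫ x, f4 x) + (∫ x, f5 x)
        - (∫ x, f6 x) - (∫ x, f7 x) := by
  have g2 : Integrable (fun x => f1 x - f2 x) volume := h1.sub h2
  have g3 : Integrable (fun x => f1 x - f2 x + f3 x) volume := g2.add h3
  have g4 : Integrable (fun x => f1 x - f2 x + f3 x + f4 x) volume := g3.add h4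
  have g5 : Integrable (fun x => f1 x - f2 x + f3 x + f4 x + f5 x) volume := g4.add h5
  have g6 : Integrable (fun x => f1 x - f2 x + f3 x + f4 x + f5 x - f6 x) volume := g5.sub h6
  have g7 : Integrable (fun x => f1 x - f2 x + f3 x + f4 x + f5 x - f6 x - f7 x) volume :=
    g6.sub h7
  rw [integral_add g7 hE, hE0, add_zero, integral_sub g6 h7, integral_sub g5 h6,
      integral_add g4 h5, integral_add g3 h4, integral_add g2 h3, integral_sub h1 h2]

lemma intervalIntegral_split7 (f1 f2 f3 f4 f5 f6 f7 : ℝ → ℝ) (a b : ℝ)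
    (h1 : IntervalIntegrable f1 volume a b) (h2 : IntervalIntegrable f2 volume a b)
    (h3 : IntervalIntegrable f3 volume a b) (h4 : IntervalIntegrable f4 volume a b)
    (h5 : IntervalIntegrable f5 volume a b) (h6 : IntervalIntegrable f6 volume a b)
    (h7 : IntervalIntegrable f7 volume a b) :
    (∫ s in a..b, (f1 s - f2 s + f3 s + f4 s + f5 s - f6 s - f7 s))
      = (∫ s in a..b, f1 s) - (∫ s in a..b, f2 s) + (∫ s in a..b, f3 s)
        + (∫ s in a..b, f4 s) + (∫ s in a..b, f5 s) - (∫ s in a..b, f6 s)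
        - (∫ s in a..b, f7 s) := by
  have g2 : IntervalIntegrable (fun x => f1 x - f2 x) volume a b := h1.sub h2
  have g3 : IntervalIntegrable (fun x => f1 x - f2 x + f3 x) volume a b := g2.add h3
  have g4 : IntervalIntegrable (fun x => f1 x - f2 x + f3 x + f4 x) volume a b := g3.add h4
  have g5 : IntervalIntegrable (fun x => f1 x - f2 x + f3 x + f4 x + f5 x) volume a b := g4.add h5
  have g6 : IntervalIntegrable (fun x => f1 x - f2 x + f3 x + f4 x + f5 x - f6 x) volume a b :=
    g5.sub h6
  rw [intervalIntegral.integral_sub g6 h7, intervalIntegral.integral_sub g5 h6,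
      intervalIntegral.integral_add g4 h5, intervalIntegral.integral_add g3 h4,
      intervalIntegral.integral_add g2 h3, intervalIntegral.integral_sub h1 h2]

set_option maxHeartbeats 4000000 in
lemma pointwise_identity
    (u b j ω : V3 → ℝ → V3) (ψ : V3 → ℝ) (η : ℝ → ℝ) (s : ℝ) (x : V3)
    (hjc : ∀ i : Fin 3, ContDiff ℝ (⊤:ℕ∞) (fun p : V3 × ℝ => j p.1 p.2 i))
    (huc : ∀ i : Fin 3, ContDiff ℝ (⊤:ℕ∞) (fun p : V3 × ℝ => u p.1 p.2 i))
    (hψ_smooth : ContDiff ℝ (⊤:ℕ∞) ψ) (hη_smooth : ContDiff ℝ (⊤:ℕ∞) η)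
    (hsub : ∀ i : Fin 3, deriv (fun r => j x r i) s =
      (∑ k, pd k (pd k (fun z => j z s i)) x)
      + ((-adv (fun y => u y s) (fun y => j y s) x
          + adv (fun y => j y s) (fun y => u y s) x
          + adv (fun y => b y s) (fun y => ω y s) x
          - adv (fun y => ω y s) (fun y => b y s) x
          + (2:ℝ) • ∑ l : Fin 3, cross3 (fun k => pd k (fun z => b z s l) x)
              (fun k => pd k (fun z => u z s l) x)) i))
    (hdivu' : pd 0 (fun z => u z s 0) x + pd 1 (fun z => u z s 1) x
        + pd 2 (fun z => u z s 2) x = 0) :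
    deriv (fun r => (1 / 2) * (∑ i, (j x r i) ^ 2) * (η r * ψ x)) s
      = (((1 / 2) * (∑ i, (j x s i) ^ 2) * (η s * ∑ k, u x s k * pd k ψ x)) - ((∑ i, ∑ k, (pd k (fun z => j z s i) x) ^ 2) * (η s * ψ x)) + ((1 / 2) * (∑ i, (j x s i) ^ 2) * (deriv η s * ψ x + η s * ∑ k, pd k (pd k ψ) x)) + (∑ i, adv (fun y => j y s) (fun y => u y s) x i * (η s * ψ x * j x s i)) + (∑ i, adv (fun y => b y s) (fun y => ω y s) x i * (η s * ψ x * j x s i)) - (∑ i, adv (fun y => ω y s) (fun y => b y s) x i * (η s * ψ x * j x s i)) - (∑ i, (2 * ∑ l : Fin 3, cross3 (fun k => pd k (fun z => u z s l) x) (fun k => pd k (fun z => b z s l) x) i) * (η s * ψ x * j x s i)))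
        + η s * ∑ k : Fin 3, pd k (fun z : V3 =>
          (∑ i, j z s i * pd k (fun z' => j z' s i) z) * ψ z
            - (1 / 2) * (∑ i, j z s i * j z s i) * pd k ψ z
            - u z s k * ((1 / 2) * (∑ i, j z s i * j z s i)) * ψ z) x := by
  have sj : ∀ i : Fin 3, ContDiff ℝ (⊤:ℕ∞) (fun z : V3 => j z s i) :=
    fun i => contDiff_slice_x (F := fun z r => j z r i) (hjc i) s
  have su : ∀ k : Fin 3, ContDiff ℝ (⊤:ℕ∞) (fun z : V3 => u z s k) :=
    fun k => contDiff_slice_x (F := fun z r => u z r k) (huc k) s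
  have hdJ : ∀ i : Fin 3, HasDerivAt (fun r => j x r i) (deriv (fun r => j x r i) s) s :=
    fun i => (diff_slice_t (F := fun z r => j z r i) (hjc i) x s).hasDerivAt
  have hSder : HasDerivAt (fun r => ∑ i, (j x r i) ^ 2)
      (∑ i, 2 * j x s i * deriv (fun r => j x r i) s) s := by
    have h : HasDerivAt (fun r => ∑ i, (j x r i) ^ 2)
        (∑ i, ((2:ℕ):ℝ) * j x s i ^ (2 - 1) * deriv (fun r => j x r i) s) s :=
      HasDerivAt.fun_sum (fun i (_ : i ∈ Finset.univ) => (hdJ i).pow 2)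
    convert h using 1
    simp [pow_one]
  have hη' : HasDerivAt η (deriv η s) s :=
    (hη_smooth.differentiable (by simp) s).hasDerivAt
  have hmain : HasDerivAt (fun r => (1 / 2 : ℝ) * (∑ i, (j x r i) ^ 2) * (η r * ψ x))
      ((1 / 2 * (∑ i, 2 * j x s i * deriv (fun r => j x r i) s)) * (η s * ψ x)
        + (1 / 2 * (∑ i, (j x s i) ^ 2)) * (deriv η s * ψ x)) s :=
    (HasDerivAt.const_mul (1/2 : ℝ) hSder).mul (hη'.mul_const (ψ x))
  rw [hmain.deriv]
  simp only [hsub]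
  have dJ : ∀ i, DifferentiableAt ℝ (fun z : V3 => j z s i) x := fun i => cdiff (sj i) x
  have dpdJ : ∀ (i k : Fin 3), DifferentiableAt ℝ (pd k (fun z : V3 => j z s i)) x :=
    fun i k => cdiff (contDiff_pd (sj i) k) x
  have dψ : DifferentiableAt ℝ ψ x := cdiff hψ_smooth x
  have dpdψ : ∀ k, DifferentiableAt ℝ (pd k ψ) x := fun k => cdiff (contDiff_pd hψ_smooth k) x
  have du : ∀ k, DifferentiableAt ℝ (fun z : V3 => u z s k) x := fun k => cdiff (su k) x
  have dB : DifferentiableAt ℝ (fun z : V3 => (1/2 : ℝ) * (∑ i, j z s i * j z s i)) x :=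
    DifferentiableAt.const_mul (DifferentiableAt.fun_sum fun i _ => (dJ i).mul (dJ i)) _
  have dA : ∀ k : Fin 3, DifferentiableAt ℝ
      (fun z : V3 => ∑ i, j z s i * pd k (fun z' => j z' s i) z) x :=
    fun k => DifferentiableAt.fun_sum fun i _ => (dJ i).mul (dpdJ i k)
  have hAi : ∀ (k i : Fin 3), pd k (fun z => j z s i * pd k (fun z' => j z' s i) z) x
      = pd k (fun z => j z s i) x * pd k (fun z => j z s i) x
        + j x s i * pd k (pd k (fun z => j z s i)) x := fun k i => pd_mul (dJ i) (dpdJ i k) k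
  have hBi : ∀ (k i : Fin 3), pd k (fun z => j z s i * j z s i) x
      = pd k (fun z => j z s i) x * j x s i + j x s i * pd k (fun z => j z s i) x :=
    fun k i => pd_mul (dJ i) (dJ i) k
  have hW : ∀ k : Fin 3, pd k (fun z : V3 =>
      (∑ i, j z s i * pd k (fun z' => j z' s i) z) * ψ z
            - (1 / 2) * (∑ i, j z s i * j z s i) * pd k ψ z
            - u z s k * ((1 / 2) * (∑ i, j z s i * j z s i)) * ψ z) x
      = ((∑ i, (pd k (fun z => j z s i) x * pd k (fun z => j z s i) x
            + j x s i * pd k (pd k (fun z => j z s i)) x)) * ψ x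
          + (∑ i, j x s i * pd k (fun z => j z s i) x) * pd k ψ x)
        - (((1 / 2) * (∑ i, (pd k (fun z => j z s i) x * j x s i
            + j x s i * pd k (fun z => j z s i) x))) * pd k ψ x
          + ((1 / 2) * (∑ i, j x s i * j x s i)) * pd k (pd k ψ) x)
        - ((pd k (fun z => u z s k) x * ((1 / 2) * (∑ i, j x s i * j x s i))
            + u x s k * ((1 / 2) * (∑ i, (pd k (fun z => j z s i) x * j x s i
              + j x s i * pd k (fun z => j z s i) x)))) * ψ x
          + (u x s k * ((1 / 2) * (∑ i, j x s i * j x s i))) * pd k ψ x) := by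
    intro k
    rw [pd_sub (((dA k).fun_mul dψ).fun_sub (dB.fun_mul (dpdψ k))) (((du k).fun_mul dB).fun_mul dψ) k,
        pd_sub ((dA k).fun_mul dψ) (dB.fun_mul (dpdψ k)) k,
        pd_mul (dA k) dψ k,
        pd_mul dB (dpdψ k) k,
        pd_mul ((du k).fun_mul dB) dψ k,
        pd_mul (du k) dB k,
        pd_const_mul (DifferentiableAt.fun_sum fun i _ => (dJ i).fun_mul (dJ i)) (1/2) k,
        pd_sum Finset.univ _ (fun i _ => (dJ i).fun_mul (dpdJ i k)) k,
        pd_sum Finset.univ _ (fun i _ => (dJ i).fun_mul (dJ i)) k]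
    simp only [hAi, hBi]
  simp only [hW]
  simp only [adv, Pi.add_apply, Pi.sub_apply, Pi.neg_apply, Pi.smul_apply, Finset.sum_apply,
    smul_eq_mul, cross3, Fin.sum_univ_three, Matrix.cons_val_zero, Matrix.cons_val_one,
    Matrix.head_cons, Matrix.cons_val_two, Matrix.tail_cons]
  linear_combination (η s * ψ x * ((1/2) * (j x s 0 * j x s 0 + j x s 1 * j x s 1
    + j x s 2 * j x s 2))) * hdivu'


set_option maxHeartbeats 2000000 in
/-- the localized magnetic enstrophy flux identity (3.4).
Multiplying the current equation by `φj`, with `φ(x,t) = η(t)ψ(x)`, and integrating by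
parts in space and time expresses the localized magnetic enstrophy flux
`F^j(t) = ∫₀ᵗ∫ (1/2)|j|²(u·∇φ)` as the sum of the terminal localized current enstrophy,
the localized palenstrophy, the lower-order cut-off term, the current-stretching term,
the two coupling terms, and the term arising from `2∑ₗ ∇bₗ × ∇uₗ`. -/
theorem localized_magnetic_enstrophy_flux_identity
    (T : ℝ) (hT : 0 < T)
    (u b : (Fin 3 → ℝ) → ℝ → (Fin 3 → ℝ))
    (hu_smooth : ContDiff ℝ (⊤ : ℕ∞) (fun p : (Fin 3 → ℝ) × ℝ => u p.1 p.2))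
    (hb_smooth : ContDiff ℝ (⊤ : ℕ∞) (fun p : (Fin 3 → ℝ) × ℝ => b p.1 p.2))
    (hu_bdd : ∀ n : ℕ, ∃ C : ℝ, ∀ (x : Fin 3 → ℝ) (t : ℝ), t ∈ Set.Icc 0 T →
      ‖iteratedFDeriv ℝ n (fun p : (Fin 3 → ℝ) × ℝ => u p.1 p.2) (x, t)‖ ≤ C)
    (hb_bdd : ∀ n : ℕ, ∃ C : ℝ, ∀ (x : Fin 3 → ℝ) (t : ℝ), t ∈ Set.Icc 0 T →
      ‖iteratedFDeriv ℝ n (fun p : (Fin 3 → ℝ) × ℝ => b p.1 p.2) (x, t)‖ ≤ C)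
    (hu_div : ∀ t ∈ Set.Icc (0 : ℝ) T, ∀ x, div3 (fun y => u y t) x = 0)
    (hb_div : ∀ t ∈ Set.Icc (0 : ℝ) T, ∀ x, div3 (fun y => b y t) x = 0)
    (ω j : (Fin 3 → ℝ) → ℝ → (Fin 3 → ℝ))
    (hω : ∀ x t, ω x t = curl3 (fun y => u y t) x)
    (hj : ∀ x t, j x t = curl3 (fun y => b y t) x)
    -- the current equation, pointwise on ℝ³ × (0,T)
    (heq : ∀ (x : Fin 3 → ℝ), ∀ t ∈ Set.Ioo (0 : ℝ) T,
      deriv (fun s => j x s) t - (fun i => ∑ k, pd k (pd k (fun z => j z t i)) x)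
        = -adv (fun y => u y t) (fun y => j y t) x
          + adv (fun y => j y t) (fun y => u y t) x
          + adv (fun y => b y t) (fun y => ω y t) x
          - adv (fun y => ω y t) (fun y => b y t) x
          + (2 : ℝ) • ∑ l : Fin 3,
              cross3 (fun k => pd k (fun z => b z t l) x)
                (fun k => pd k (fun z => u z t l) x))
    (ψ : (Fin 3 → ℝ) → ℝ)
    (hψ_smooth : ContDiff ℝ (⊤ : ℕ∞) ψ) (hψ_supp : HasCompactSupport ψ)
    (hψ_range : ∀ x, ψ x ∈ Set.Icc (0 : ℝ) 1)
    (η : ℝ → ℝ)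
    (hη_smooth : ContDiff ℝ (⊤ : ℕ∞) η)
    (hη_range : ∀ t ∈ Set.Icc (0 : ℝ) T, η t ∈ Set.Icc (0 : ℝ) 1)
    (hη_zero : ∀ t ∈ Set.Icc (0 : ℝ) (T / 3), η t = 0)
    (hη_one : ∀ t ∈ Set.Icc (2 * T / 3) T, η t = 1) :
    ∀ t ∈ Set.Icc (2 * T / 3) T,
      (∫ s in (0 : ℝ)..t, ∫ x : Fin 3 → ℝ,
          (1 / 2) * (∑ i, (j x s i) ^ 2) * (η s * ∑ k, u x s k * pd k ψ x))
        = (∫ x : Fin 3 → ℝ, (1 / 2) * (∑ i, (j x t i) ^ 2) * ψ x)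
          + (∫ s in (0 : ℝ)..t, ∫ x : Fin 3 → ℝ,
              (∑ i, ∑ k, (pd k (fun z => j z s i) x) ^ 2) * (η s * ψ x))
          - (∫ s in (0 : ℝ)..t, ∫ x : Fin 3 → ℝ,
              (1 / 2) * (∑ i, (j x s i) ^ 2)
                * (deriv η s * ψ x + η s * ∑ k, pd k (pd k ψ) x))
          - (∫ s in (0 : ℝ)..t, ∫ x : Fin 3 → ℝ,
              ∑ i, adv (fun y => j y s) (fun y => u y s) x i * (η s * ψ x * j x s i))
          - (∫ s in (0 : ℝ)..t, ∫ x : Fin 3 → ℝ,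
              ∑ i, adv (fun y => b y s) (fun y => ω y s) x i * (η s * ψ x * j x s i))
          + (∫ s in (0 : ℝ)..t, ∫ x : Fin 3 → ℝ,
              ∑ i, adv (fun y => ω y s) (fun y => b y s) x i * (η s * ψ x * j x s i))
          + (∫ s in (0 : ℝ)..t, ∫ x : Fin 3 → ℝ,
              ∑ i, (2 * ∑ l : Fin 3,
                  cross3 (fun k => pd k (fun z => u z s l) x)
                    (fun k => pd k (fun z => b z s l) x) i)
                * (η s * ψ x * j x s i)) := by
  have hK : IsCompact (tsupport ψ) := hψ_supp
  have hψ0 : ∀ x ∉ tsupport ψ, ψ x = 0 := fun x hx => image_eq_zero_of_notMem_tsupport hx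
  have hpdψ0 : ∀ x ∉ tsupport ψ, ∀ k, pd k ψ x = 0 := fun x hx k => pd_zero_of_nmem_tsupport hx k
  have hpd2ψ0 : ∀ x ∉ tsupport ψ, ∀ k, pd k (pd k ψ) x = 0 := fun x hx k =>
    pd_zero_of_nmem_tsupport (fun h => hx (tsupport_pd_subset k h)) k
  have hjc : ∀ i : Fin 3, ContDiff ℝ (⊤:ℕ∞) (fun p : V3 × ℝ => j p.1 p.2 i) := by
    intro i
    have h : (fun p : V3 × ℝ => j p.1 p.2 i) = fun p : V3 × ℝ => curl3 (fun y => b y p.2) p.1 i := by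
      funext p; rw [hj]
    rw [h]; exact contDiff_curl_param hb_smooth i
  have hωc : ∀ i : Fin 3, ContDiff ℝ (⊤:ℕ∞) (fun p : V3 × ℝ => ω p.1 p.2 i) := by
    intro i
    have h : (fun p : V3 × ℝ => ω p.1 p.2 i) = fun p : V3 × ℝ => curl3 (fun y => u y p.2) p.1 i := by
      funext p; rw [hω]
    rw [h]; exact contDiff_curl_param hu_smooth i
  have huc : ∀ i : Fin 3, ContDiff ℝ (⊤:ℕ∞) (fun p : V3 × ℝ => u p.1 p.2 i) :=
    fun i => contDiff_comp_eval hu_smooth i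
  have hbc : ∀ i : Fin 3, ContDiff ℝ (⊤:ℕ∞) (fun p : V3 × ℝ => b p.1 p.2 i) :=
    fun i => contDiff_comp_eval hb_smooth i
  have hpdj : ∀ (i k : Fin 3), ContDiff ℝ (⊤:ℕ∞) (fun p : V3 × ℝ => pd k (fun z => j z p.2 i) p.1) :=
    fun i k => contDiff_pd_param (F := fun z s => j z s i) (hjc i) k
  have hpdu : ∀ (i k : Fin 3), ContDiff ℝ (⊤:ℕ∞) (fun p : V3 × ℝ => pd k (fun z => u z p.2 i) p.1) :=
    fun i k => contDiff_pd_param (F := fun z s => u z s i) (huc i) k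
  have hpdb : ∀ (i k : Fin 3), ContDiff ℝ (⊤:ℕ∞) (fun p : V3 × ℝ => pd k (fun z => b z p.2 i) p.1) :=
    fun i k => contDiff_pd_param (F := fun z s => b z s i) (hbc i) k
  have hpdω : ∀ (i k : Fin 3), ContDiff ℝ (⊤:ℕ∞) (fun p : V3 × ℝ => pd k (fun z => ω z p.2 i) p.1) :=
    fun i k => contDiff_pd_param (F := fun z s => ω z s i) (hωc i) k
  have cη : Continuous η := hη_smooth.continuous
  have cη' : Continuous (deriv η) := hη_smooth.continuous_deriv (by exact_mod_cast le_top)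
  have cψ : Continuous ψ := hψ_smooth.continuous
  have intg : ∀ f : V3 → ℝ, Continuous f → (∀ x ∉ tsupport ψ, f x = 0) → Integrable f volume :=
    fun f hf h0 => hf.integrable_of_hasCompactSupport (HasCompactSupport.intro hK h0)
  have hc1 : Continuous fun p : V3 × ℝ => (1 / 2) * (∑ i, (j p.1 p.2 i) ^ 2) * (η p.2 * ∑ k, u p.1 p.2 k * pd k ψ p.1) :=
    (continuous_const.mul (continuous_finset_sum _ fun i _ => ((hjc i).continuous).pow 2)).mul
      ((cη.comp continuous_snd).mul (continuous_finset_sum _ fun k _ =>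
        ((huc k).continuous).mul ((contDiff_pd hψ_smooth k).continuous.comp continuous_fst)))
  have hc2 : Continuous fun p : V3 × ℝ => (∑ i, ∑ k, (pd k (fun z => j z p.2 i) p.1) ^ 2) * (η p.2 * ψ p.1) :=
    (continuous_finset_sum _ fun i _ => continuous_finset_sum _ fun k _ =>
      ((hpdj i k).continuous).pow 2).mul
      ((cη.comp continuous_snd).mul (cψ.comp continuous_fst))
  have hc3 : Continuous fun p : V3 × ℝ => (1 / 2) * (∑ i, (j p.1 p.2 i) ^ 2) * (deriv η p.2 * ψ p.1 + η p.2 * ∑ k, pd k (pd k ψ) p.1) :=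
    (continuous_const.mul (continuous_finset_sum _ fun i _ => ((hjc i).continuous).pow 2)).mul
      (((cη'.comp continuous_snd).mul (cψ.comp continuous_fst)).add
        ((cη.comp continuous_snd).mul (continuous_finset_sum _ fun k _ =>
          ((contDiff_pd (contDiff_pd hψ_smooth k) k).continuous.comp continuous_fst))))
  have hc4 : Continuous fun p : V3 × ℝ => ∑ i, adv (fun y => j y p.2) (fun y => u y p.2) p.1 i * (η p.2 * ψ p.1 * j p.1 p.2 i) :=
    continuous_finset_sum _ fun i _ =>
      (continuous_adv_comp (A := j) (B := u) (fun k => (hjc k).continuous)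
        (fun i k => (hpdu i k).continuous) i).mul
        (((cη.comp continuous_snd).mul (cψ.comp continuous_fst)).mul ((hjc i).continuous))
  have hc5 : Continuous fun p : V3 × ℝ => ∑ i, adv (fun y => b y p.2) (fun y => ω y p.2) p.1 i * (η p.2 * ψ p.1 * j p.1 p.2 i) :=
    continuous_finset_sum _ fun i _ =>
      (continuous_adv_comp (A := b) (B := ω) (fun k => (hbc k).continuous)
        (fun i k => (hpdω i k).continuous) i).mul
        (((cη.comp continuous_snd).mul (cψ.comp continuous_fst)).mul ((hjc i).continuous))
  have hc6 : Continuous fun p : V3 × ℝ => ∑ i, adv (fun y => ω y p.2) (fun y => b y p.2) p.1 i * (η p.2 * ψ p.1 * j p.1 p.2 i) :=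
    continuous_finset_sum _ fun i _ =>
      (continuous_adv_comp (A := ω) (B := b) (fun k => (hωc k).continuous)
        (fun i k => (hpdb i k).continuous) i).mul
        (((cη.comp continuous_snd).mul (cψ.comp continuous_fst)).mul ((hjc i).continuous))
  have hc7 : Continuous fun p : V3 × ℝ => ∑ i, (2 * ∑ l : Fin 3, cross3 (fun k => pd k (fun z => u z p.2 l) p.1) (fun k => pd k (fun z => b z p.2 l) p.1) i) * (η p.2 * ψ p.1 * j p.1 p.2 i) :=
    continuous_finset_sum _ fun i _ =>
      (continuous_const.mul (continuous_finset_sum _ fun l _ =>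
        continuous_cross3_comp (fun (p : V3 × ℝ) => fun k => pd k (fun z => u z p.2 l) p.1)
          (fun (p : V3 × ℝ) => fun k => pd k (fun z => b z p.2 l) p.1)
          (fun k => (hpdu l k).continuous) (fun k => (hpdb l k).continuous) i)).mul
        (((cη.comp continuous_snd).mul (cψ.comp continuous_fst)).mul ((hjc i).continuous))
  have hcG : ContDiff ℝ (⊤:ℕ∞) fun p : V3 × ℝ => (1 / 2) * (∑ i, (j p.1 p.2 i) ^ 2) * (η p.2 * ψ p.1) :=
    (contDiff_const.mul (ContDiff.sum fun i _ => (hjc i).pow 2)).mul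
      ((hη_smooth.comp contDiff_snd).mul (hψ_smooth.comp contDiff_fst))
  have h01 : ∀ x ∉ tsupport ψ, ∀ s : ℝ, (1 / 2) * (∑ i, (j x s i) ^ 2) * (η s * ∑ k, u x s k * pd k ψ x) = (0:ℝ) := by
    intro x hx s; simp [hpdψ0 x hx]
  have h02 : ∀ x ∉ tsupport ψ, ∀ s : ℝ, (∑ i, ∑ k, (pd k (fun z => j z s i) x) ^ 2) * (η s * ψ x) = (0:ℝ) := by
    intro x hx s; simp [hψ0 x hx]
  have h03 : ∀ x ∉ tsupport ψ, ∀ s : ℝ, (1 / 2) * (∑ i, (j x s i) ^ 2) * (deriv η s * ψ x + η s * ∑ k, pd k (pd k ψ) x) = (0:ℝ) := by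
    intro x hx s; simp [hψ0 x hx, hpd2ψ0 x hx]
  have h04 : ∀ x ∉ tsupport ψ, ∀ s : ℝ, ∑ i, adv (fun y => j y s) (fun y => u y s) x i * (η s * ψ x * j x s i) = (0:ℝ) := by
    intro x hx s; simp [hψ0 x hx]
  have h05 : ∀ x ∉ tsupport ψ, ∀ s : ℝ, ∑ i, adv (fun y => b y s) (fun y => ω y s) x i * (η s * ψ x * j x s i) = (0:ℝ) := by
    intro x hx s; simp [hψ0 x hx]
  have h06 : ∀ x ∉ tsupport ψ, ∀ s : ℝ, ∑ i, adv (fun y => ω y s) (fun y => b y s) x i * (η s * ψ x * j x s i) = (0:ℝ) := by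
    intro x hx s; simp [hψ0 x hx]
  have h07 : ∀ x ∉ tsupport ψ, ∀ s : ℝ, ∑ i, (2 * ∑ l : Fin 3, cross3 (fun k => pd k (fun z => u z s l) x) (fun k => pd k (fun z => b z s l) x) i) * (η s * ψ x * j x s i) = (0:ℝ) := by
    intro x hx s; simp [hψ0 x hx]
  have h0G : ∀ x ∉ tsupport ψ, ∀ s : ℝ, (1 / 2) * (∑ i, (j x s i) ^ 2) * (η s * ψ x) = (0:ℝ) := by
    intro x hx s; simp [hψ0 x hx]
  intro t ht
  have ht0 : 0 < t := lt_of_lt_of_le (by linarith) ht.1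
  have htT : t ≤ T := ht.2
  have key : ∀ s ∈ Set.Ioo (0:ℝ) t,
      HasDerivAt (fun s => ∫ x : V3, (1 / 2) * (∑ i, (j x s i) ^ 2) * (η s * ψ x)) ((∫ x : V3, (1 / 2) * (∑ i, (j x s i) ^ 2) * (η s * ∑ k, u x s k * pd k ψ x)) - (∫ x : V3, (∑ i, ∑ k, (pd k (fun z => j z s i) x) ^ 2) * (η s * ψ x)) + (∫ x : V3, (1 / 2) * (∑ i, (j x s i) ^ 2) * (deriv η s * ψ x + η s * ∑ k, pd k (pd k ψ) x)) + (∫ x : V3, ∑ i, adv (fun y => j y s) (fun y => u y s) x i * (η s * ψ x * j x s i)) + (∫ x : V3, ∑ i, adv (fun y => b y s) (fun y => ω y s) x i * (η s * ψ x * j x s i)) - (∫ x : V3, ∑ i, adv (fun y => ω y s) (fun y => b y s) x i * (η s * ψ x * j x s i)) - (∫ x : V3, ∑ i, (2 * ∑ l : Fin 3, cross3 (fun k => pd k (fun z => u z s l) x) (fun k => pd k (fun z => b z s l) x) i) * (η s * ψ x * j x s i))) s := by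
    intro s hs
    have hsT : s ∈ Set.Ioo (0:ℝ) T := ⟨hs.1, lt_of_lt_of_le hs.2 htT⟩
    have hsIcc : s ∈ Set.Icc (0:ℝ) T := ⟨hsT.1.le, hsT.2.le⟩
    have hder := hasDerivAt_param_integral hK hcG h0G s
    have hder' : HasDerivAt (fun s => ∫ x : V3, (1 / 2) * (∑ i, (j x s i) ^ 2) * (η s * ψ x))
        (∫ x : V3, deriv (fun r => (1 / 2) * (∑ i, (j x r i) ^ 2) * (η r * ψ x)) s) s := hder
    have sj : ∀ i : Fin 3, ContDiff ℝ (⊤:ℕ∞) (fun z : V3 => j z s i) :=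
      fun i => contDiff_slice_x (F := fun z r => j z r i) (hjc i) s
    have su : ∀ k : Fin 3, ContDiff ℝ (⊤:ℕ∞) (fun z : V3 => u z s k) :=
      fun k => contDiff_slice_x (F := fun z r => u z r k) (huc k) s
    have hWsm : ∀ k : Fin 3, ContDiff ℝ (⊤:ℕ∞) (fun z : V3 =>
          (∑ i, j z s i * pd k (fun z' => j z' s i) z) * ψ z
            - (1 / 2) * (∑ i, j z s i * j z s i) * pd k ψ z
            - u z s k * ((1 / 2) * (∑ i, j z s i * j z s i)) * ψ z) := by
      intro k
      exact (((ContDiff.sum fun i _ => (sj i).mul (contDiff_pd (sj i) k)).mul hψ_smooth).sub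
        ((contDiff_const.mul (ContDiff.sum fun i _ => (sj i).mul (sj i))).mul
          (contDiff_pd hψ_smooth k))).sub
        (((su k).mul (contDiff_const.mul (ContDiff.sum fun i _ => (sj i).mul (sj i)))).mul
          hψ_smooth)
    have hW0 : ∀ k : Fin 3, ∀ x ∉ tsupport ψ, (fun z : V3 =>
          (∑ i, j z s i * pd k (fun z' => j z' s i) z) * ψ z
            - (1 / 2) * (∑ i, j z s i * j z s i) * pd k ψ z
            - u z s k * ((1 / 2) * (∑ i, j z s i * j z s i)) * ψ z) x = 0 := by
      intro k x hx
      simp [hψ0 x hx, hpdψ0 x hx]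
    have hWint0 : ∀ k : Fin 3, (∫ x : V3, pd k (fun z : V3 =>
          (∑ i, j z s i * pd k (fun z' => j z' s i) z) * ψ z
            - (1 / 2) * (∑ i, j z s i * j z s i) * pd k ψ z
            - u z s k * ((1 / 2) * (∑ i, j z s i * j z s i)) * ψ z) x) = 0 := fun k =>
      integral_pd_eq_zero _ (hWsm k) (HasCompactSupport.intro hK (hW0 k)) k
    have iW : ∀ k : Fin 3, Integrable (fun x : V3 => pd k (fun z : V3 =>
          (∑ i, j z s i * pd k (fun z' => j z' s i) z) * ψ z
            - (1 / 2) * (∑ i, j z s i * j z s i) * pd k ψ z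
            - u z s k * ((1 / 2) * (∑ i, j z s i * j z s i)) * ψ z) x) volume := by
      intro k
      apply intg _ (contDiff_pd (hWsm k) k).continuous
      intro x hx
      exact pd_zero_of_nmem_tsupport
        (fun hmem => hx (tsupport_subset_of_zero (isClosed_tsupport ψ) (hW0 k) hmem)) k
    have hsubx : ∀ x : V3, ∀ i : Fin 3, deriv (fun r => j x r i) s =
        (∑ k, pd k (pd k (fun z => j z s i)) x)
        + ((-adv (fun y => u y s) (fun y => j y s) x
            + adv (fun y => j y s) (fun y => u y s) x
            + adv (fun y => b y s) (fun y => ω y s) x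
            - adv (fun y => ω y s) (fun y => b y s) x
            + (2:ℝ) • ∑ l : Fin 3, cross3 (fun k => pd k (fun z => b z s l) x)
                (fun k => pd k (fun z => u z s l) x)) i) := by
      intro x i
      have hdJ : ∀ i : Fin 3, HasDerivAt (fun r => j x r i) (deriv (fun r => j x r i) s) s :=
        fun i => (diff_slice_t (F := fun z r => j z r i) (hjc i) x s).hasDerivAt
      have hpi : HasDerivAt (fun r => j x r) (fun i => deriv (fun r => j x r i) s) s :=
        hasDerivAt_pi.2 hdJ
      have heqx := heq x s hsT
      rw [hpi.deriv] at heqx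
      have h := congrFun heqx i
      simp only [Pi.sub_apply] at h
      linarith [h]
    have hdivux : ∀ x : V3, pd 0 (fun z => u z s 0) x + pd 1 (fun z => u z s 1) x
        + pd 2 (fun z => u z s 2) x = 0 := by
      intro x
      have h := hu_div s hsIcc x
      simpa [div3, Fin.sum_univ_three] using h
    have hpoint := fun x : V3 => pointwise_identity u b j ω ψ η s x hjc huc hψ_smooth
      hη_smooth (hsubx x) (hdivux x)
    have i1 : Integrable (fun x : V3 => (1 / 2) * (∑ i, (j x s i) ^ 2) * (η s * ∑ k, u x s k * pd k ψ x)) volume :=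
      intg _ (continuous_slice (F := fun x s => (1 / 2) * (∑ i, (j x s i) ^ 2) * (η s * ∑ k, u x s k * pd k ψ x)) hc1 s) (fun x hx => h01 x hx s)
    have i2 : Integrable (fun x : V3 => (∑ i, ∑ k, (pd k (fun z => j z s i) x) ^ 2) * (η s * ψ x)) volume :=
      intg _ (continuous_slice (F := fun x s => (∑ i, ∑ k, (pd k (fun z => j z s i) x) ^ 2) * (η s * ψ x)) hc2 s) (fun x hx => h02 x hx s)
    have i3 : Integrable (fun x : V3 => (1 / 2) * (∑ i, (j x s i) ^ 2) * (deriv η s * ψ x + η s * ∑ k, pd k (pd k ψ) x)) volume :=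
      intg _ (continuous_slice (F := fun x s => (1 / 2) * (∑ i, (j x s i) ^ 2) * (deriv η s * ψ x + η s * ∑ k, pd k (pd k ψ) x)) hc3 s) (fun x hx => h03 x hx s)
    have i4 : Integrable (fun x : V3 => ∑ i, adv (fun y => j y s) (fun y => u y s) x i * (η s * ψ x * j x s i)) volume :=
      intg _ (continuous_slice (F := fun x s => ∑ i, adv (fun y => j y s) (fun y => u y s) x i * (η s * ψ x * j x s i)) hc4 s) (fun x hx => h04 x hx s)
    have i5 : Integrable (fun x : V3 => ∑ i, adv (fun y => b y s) (fun y => ω y s) x i * (η s * ψ x * j x s i)) volume :=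
      intg _ (continuous_slice (F := fun x s => ∑ i, adv (fun y => b y s) (fun y => ω y s) x i * (η s * ψ x * j x s i)) hc5 s) (fun x hx => h05 x hx s)
    have i6 : Integrable (fun x : V3 => ∑ i, adv (fun y => ω y s) (fun y => b y s) x i * (η s * ψ x * j x s i)) volume :=
      intg _ (continuous_slice (F := fun x s => ∑ i, adv (fun y => ω y s) (fun y => b y s) x i * (η s * ψ x * j x s i)) hc6 s) (fun x hx => h06 x hx s)
    have i7 : Integrable (fun x : V3 => ∑ i, (2 * ∑ l : Fin 3, cross3 (fun k => pd k (fun z => u z s l) x) (fun k => pd k (fun z => b z s l) x) i) * (η s * ψ x * j x s i)) volume :=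
      intg _ (continuous_slice (F := fun x s => ∑ i, (2 * ∑ l : Fin 3, cross3 (fun k => pd k (fun z => u z s l) x) (fun k => pd k (fun z => b z s l) x) i) * (η s * ψ x * j x s i)) hc7 s) (fun x hx => h07 x hx s)
    have iE : Integrable (fun x : V3 => η s * ∑ k : Fin 3, pd k (fun z : V3 =>
          (∑ i, j z s i * pd k (fun z' => j z' s i) z) * ψ z
            - (1 / 2) * (∑ i, j z s i * j z s i) * pd k ψ z
            - u z s k * ((1 / 2) * (∑ i, j z s i * j z s i)) * ψ z) x) volume :=
      (integrable_finset_sum _ fun k _ => iW k).const_mul (η s)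
    have hE0 : (∫ x : V3, η s * ∑ k : Fin 3, pd k (fun z : V3 =>
          (∑ i, j z s i * pd k (fun z' => j z' s i) z) * ψ z
            - (1 / 2) * (∑ i, j z s i * j z s i) * pd k ψ z
            - u z s k * ((1 / 2) * (∑ i, j z s i * j z s i)) * ψ z) x) = 0 := by
      rw [integral_const_mul, integral_finset_sum _ (fun k _ => iW k)]
      simp only [hWint0, Finset.sum_const_zero, mul_zero]
    have hsplit := (integral_congr_ae (Filter.Eventually.of_forall hpoint)).trans
      (integral_split7 _ _ _ _ _ _ _ _ i1 i2 i3 i4 i5 i6 i7 iE hE0)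
    rw [hsplit] at hder'
    exact hder'
  have contG : Continuous fun s => ∫ x : V3, (1 / 2) * (∑ i, (j x s i) ^ 2) * (η s * ψ x) :=
    continuous_param_integral hK hcG.continuous h0G
  have hii : ∀ (P : V3 → ℝ → ℝ), Continuous (fun p : V3 × ℝ => P p.1 p.2) →
      (∀ x ∉ tsupport ψ, ∀ s, P x s = 0) →
      IntervalIntegrable (fun s => ∫ x : V3, P x s) volume 0 t :=
    fun P h h0 => (continuous_param_integral hK h h0).intervalIntegrable 0 t
  have hii1 := hii (fun x s => (1 / 2) * (∑ i, (j x s i) ^ 2) * (η s * ∑ k, u x s k * pd k ψ x)) hc1 h01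
  have hii2 := hii (fun x s => (∑ i, ∑ k, (pd k (fun z => j z s i) x) ^ 2) * (η s * ψ x)) hc2 h02
  have hii3 := hii (fun x s => (1 / 2) * (∑ i, (j x s i) ^ 2) * (deriv η s * ψ x + η s * ∑ k, pd k (pd k ψ) x)) hc3 h03
  have hii4 := hii (fun x s => ∑ i, adv (fun y => j y s) (fun y => u y s) x i * (η s * ψ x * j x s i)) hc4 h04
  have hii5 := hii (fun x s => ∑ i, adv (fun y => b y s) (fun y => ω y s) x i * (η s * ψ x * j x s i)) hc5 h05
  have hii6 := hii (fun x s => ∑ i, adv (fun y => ω y s) (fun y => b y s) x i * (η s * ψ x * j x s i)) hc6 h06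
  have hii7 := hii (fun x s => ∑ i, (2 * ∑ l : Fin 3, cross3 (fun k => pd k (fun z => u z s l) x) (fun k => pd k (fun z => b z s l) x) i) * (η s * ψ x * j x s i)) hc7 h07
  have hFTC : (∫ s in (0:ℝ)..t, ((∫ x : V3, (1 / 2) * (∑ i, (j x s i) ^ 2) * (η s * ∑ k, u x s k * pd k ψ x)) - (∫ x : V3, (∑ i, ∑ k, (pd k (fun z => j z s i) x) ^ 2) * (η s * ψ x)) + (∫ x : V3, (1 / 2) * (∑ i, (j x s i) ^ 2) * (deriv η s * ψ x + η s * ∑ k, pd k (pd k ψ) x)) + (∫ x : V3, ∑ i, adv (fun y => j y s) (fun y => u y s) x i * (η s * ψ x * j x s i)) + (∫ x : V3, ∑ i, adv (fun y => b y s) (fun y => ω y s) x i * (η s * ψ x * j x s i)) - (∫ x : V3, ∑ i, adv (fun y => ω y s) (fun y => b y s) x i * (η s * ψ x * j x s i)) - (∫ x : V3, ∑ i, (2 * ∑ l : Fin 3, cross3 (fun k => pd k (fun z => u z s l) x) (fun k => pd k (fun z => b z s l) x) i) * (η s * ψ x * j x s i))))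
      = (∫ x : V3, (1 / 2) * (∑ i, (j x t i) ^ 2) * (η t * ψ x)) - (∫ x : V3, (1 / 2) * (∑ i, (j x 0 i) ^ 2) * (η 0 * ψ x)) := by
    apply intervalIntegral.integral_eq_sub_of_hasDeriv_right contG.continuousOn
    · intro s hs
      rw [min_eq_left ht0.le, max_eq_right ht0.le] at hs
      exact (key s hs).hasDerivWithinAt
    · exact ((((((hii1.sub hii2).add hii3).add hii4).add hii5).sub hii6).sub hii7)
  have hG0 : (∫ x : V3, (1 / 2) * (∑ i, (j x 0 i) ^ 2) * (η 0 * ψ x)) = 0 := by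
    have h0 : η 0 = 0 := hη_zero 0 ⟨le_refl 0, by positivity⟩
    simp [h0]
  have hGt : (∫ x : V3, (1 / 2) * (∑ i, (j x t i) ^ 2) * (η t * ψ x)) = ∫ x : V3, (1 / 2) * (∑ i, (j x t i) ^ 2) * ψ x := by
    congr 1; funext x; rw [hη_one t ht, one_mul]
  have hsplitI := intervalIntegral_split7
      (fun s => ∫ x : V3, (1 / 2) * (∑ i, (j x s i) ^ 2) * (η s * ∑ k, u x s k * pd k ψ x))
      (fun s => ∫ x : V3, (∑ i, ∑ k, (pd k (fun z => j z s i) x) ^ 2) * (η s * ψ x))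
      (fun s => ∫ x : V3, (1 / 2) * (∑ i, (j x s i) ^ 2) * (deriv η s * ψ x + η s * ∑ k, pd k (pd k ψ) x))
      (fun s => ∫ x : V3, ∑ i, adv (fun y => j y s) (fun y => u y s) x i * (η s * ψ x * j x s i))
      (fun s => ∫ x : V3, ∑ i, adv (fun y => b y s) (fun y => ω y s) x i * (η s * ψ x * j x s i))
      (fun s => ∫ x : V3, ∑ i, adv (fun y => ω y s) (fun y => b y s) x i * (η s * ψ x * j x s i))
      (fun s => ∫ x : V3, ∑ i, (2 * ∑ l : Fin 3, cross3 (fun k => pd k (fun z => u z s l) x) (fun k => pd k (fun z => b z s l) x) i) * (η s * ψ x * j x s i))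
      0 t hii1 hii2 hii3 hii4 hii5 hii6 hii7
  rw [hsplitI, hGt, hG0] at hFTC
  linarith [hFTC]

end
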